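/- Let α be a type and W a set of elements of the free group FreeGroup α. Let P : Grp → Prop be the predicate asserting that a group G satisfies all laws in W, i.e., FreeGroup.lift g w = 1 for every w ∈ W and every g : α → G. Then there exist a functor R : Grp ⥤ FullSubcategory P and an adjunction R ⊣ fullSubcategoryInclusion P such that for every group G the component of the adjunction unit at G is a surjective group homomorphism whose kernel equals the verbal subgroup V_W(G). -/

import Mathlib

open CategoryTheory

universe u

def verbalSubgroup (α : Type*) (W : Set (FreeGroup α)) (G : Type*) [Group G] : Subgroup G :=
  Subgroup.closure {x : G | ∃ w ∈ W, ∃ g : α → G, FreeGroup.lift g w = x}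

section aux

variable {α : Type u} (W : Set (FreeGroup α))

lemma lift_comp {G H : Type*} [Group G] [Group H] (f : G →* H) (g : α → G) :
    FreeGroup.lift (f ∘ g) = f.comp (FreeGroup.lift g) :=
  FreeGroup.ext_hom _ _ (fun a => by simp)

lemma verbal_map_le {G H : Type*} [Group G] [Group H] (f : G →* H) :
    (verbalSubgroup α W G).map f ≤ verbalSubgroup α W H := by
  rw [verbalSubgroup, MonoidHom.map_closure]
  apply Subgroup.closure_mono
  rintro x ⟨y, ⟨w, hw, g, rfl⟩, rfl⟩
  exact ⟨w, hw, f ∘ g, by rw [lift_comp]; rfl⟩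

lemma verbal_le_comap {G H : Type*} [Group G] [Group H] (f : G →* H) :
    verbalSubgroup α W G ≤ (verbalSubgroup α W H).comap f :=
  Subgroup.map_le_iff_le_comap.mp (verbal_map_le W f)

instance verbal_normal (G : Type*) [Group G] : (verbalSubgroup α W G).Normal := by
  constructor
  intro n hn g
  have := verbal_map_le W (MulAut.conj g).toMonoidHom ⟨n, hn, rfl⟩
  simpa using this

lemma quot_prop (G : Type u) [Group G] :
    ∀ w ∈ W, ∀ g : α → (G ⧸ verbalSubgroup α W G), FreeGroup.lift g w = 1 := by
  intro w hw g
  choose g' hg' using fun a => QuotientGroup.mk_surjective (g a)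
  have key : ((QuotientGroup.mk' (verbalSubgroup α W G)).comp (FreeGroup.lift g')) w
      = FreeGroup.lift g w := by
    rw [← lift_comp]
    have h2 : (⇑(QuotientGroup.mk' (verbalSubgroup α W G)) ∘ g') = g := funext fun a => hg' a
    rw [h2]
  rw [← key, MonoidHom.comp_apply, QuotientGroup.mk'_apply, QuotientGroup.eq_one_iff]
  exact Subgroup.subset_closure ⟨w, hw, g', rfl⟩

lemma ker_ge_of_prop {G : Type u} [Group G] {H : Type u} [Group H]
    (hH : ∀ w ∈ W, ∀ g : α → H, FreeGroup.lift g w = 1) (f : G →* H) :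
    verbalSubgroup α W G ≤ f.ker := by
  apply (Subgroup.closure_le _).mpr
  rintro x ⟨w, hw, g, rfl⟩
  simp only [SetLike.mem_coe, MonoidHom.mem_ker]
  have : f (FreeGroup.lift g w) = FreeGroup.lift (f ∘ g) w := by rw [lift_comp]; rfl
  rw [this]
  exact hH w hw _

end aux

theorem variety_reflection_adjunction (α : Type u) (W : Set (FreeGroup α)) :
    ∃ (R : GrpCat.{u} ⥤ ObjectProperty.FullSubcategory fun G : GrpCat.{u} => ∀ w ∈ W, ∀ g : α → G, FreeGroup.lift g w = 1)
      (adj : R ⊣ ObjectProperty.ι fun G : GrpCat.{u} => ∀ w ∈ W, ∀ g : α → G, FreeGroup.lift g w = 1),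
      ∀ G : GrpCat.{u}, Function.Surjective (adj.unit.app G).hom ∧
        MonoidHom.ker (adj.unit.app G).hom = verbalSubgroup α W G := by
  refine ⟨{
      obj := fun G => ⟨GrpCat.of (G ⧸ verbalSubgroup α W G), quot_prop W G⟩
      map := fun {G H} f => ObjectProperty.homMk
        (GrpCat.ofHom (QuotientGroup.map _ _ f.hom (verbal_le_comap W f.hom)))
      map_id := ?_
      map_comp := ?_ }, ?_⟩
  · intro G
    refine ObjectProperty.hom_ext (h := GrpCat.hom_ext (MonoidHom.ext fun x => ?_))
    induction x using QuotientGroup.induction_on with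
    | H x => rfl
  · intro G H K f g
    refine ObjectProperty.hom_ext (h := GrpCat.hom_ext (MonoidHom.ext fun x => ?_))
    induction x using QuotientGroup.induction_on with
    | H x => rfl
  refine ⟨Adjunction.mkOfHomEquiv {
    homEquiv := fun G H => {
      toFun := fun f => GrpCat.ofHom (f.hom.hom.comp (QuotientGroup.mk' _))
      invFun := fun f => ObjectProperty.homMk
        (GrpCat.ofHom (QuotientGroup.lift _ f.hom (ker_ge_of_prop W H.property f.hom)))
      left_inv := fun f => by
        refine ObjectProperty.hom_ext (h := GrpCat.hom_ext (MonoidHom.ext fun x => ?_))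
        induction x using QuotientGroup.induction_on with
        | H x => rfl
      right_inv := fun f => rfl }
    homEquiv_naturality_left_symm := fun {G G' H} f g => by
      refine ObjectProperty.hom_ext (h := GrpCat.hom_ext (MonoidHom.ext fun x => ?_))
      induction x using QuotientGroup.induction_on with
      | H x => rfl
    homEquiv_naturality_right := fun {G H H'} f g => rfl }, ?_⟩
  intro G
  constructor
  · intro x
    induction x using QuotientGroup.induction_on with
    | H x => exact ⟨x, rfl⟩
  · ext x
    rw [MonoidHom.mem_ker]
    show (QuotientGroup.mk x : G ⧸ verbalSubgroup α W G) = 1 ↔ _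
    rw [QuotientGroup.eq_one_iff]
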